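/- Let n be an odd prime, q a prime power with gcd(n, q − 1) = 1 (respectively gcd(n, q² − 1) = 1), and a = 0 (respectively a ≠ 0) in F_q. Then for every m of the form m = (n−1)s + 1 with s ≥ 0, the Dickson polynomial D_n(x, a) induces a permutation of the extension field F_{q^m}. -/

import Mathlib

open Polynomial

private theorem dickson_eval_add_aux {R : Type*} [CommRing R] (x y : R) :
    ∀ n, (Polynomial.dickson 1 (x * y) n).eval (x + y) = x ^ n + y ^ n
  | 0 => by simp [Polynomial.dickson_zero]; norm_num
  | 1 => by simp [Polynomial.dickson_one]
  | n + 2 => by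
    simp only [Polynomial.dickson_add_two, Polynomial.eval_sub, Polynomial.eval_mul,
      Polynomial.eval_X, Polynomial.eval_C, dickson_eval_add_aux x y n,
      dickson_eval_add_aux x y (n + 1)]
    ring

private theorem dickson_one_zero_aux {R : Type*} [CommRing R] :
    ∀ n, 1 ≤ n → Polynomial.dickson 1 (0 : R) n = Polynomial.X ^ n
  | 1, _ => by simp [Polynomial.dickson_one]
  | 2, _ => by simp [Polynomial.dickson_two, sq]
  | n + 3, _ => by
    rw [Polynomial.dickson_add_two, dickson_one_zero_aux (n + 2) (by omega)]
    simp [pow_succ, mul_comm]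

/-- The key number-theoretic fact. -/
private theorem coprime_aux (n q s t : ℕ) (hn : n.Prime) (hq : 1 ≤ q)
    (h : Nat.Coprime n (q ^ t - 1)) :
    Nat.Coprime n ((q ^ ((n - 1) * s + 1)) ^ t - 1) := by
  haveI : Fact n.Prime := ⟨hn⟩
  have ht : t ≠ 0 := by
    rintro rfl
    simp [Nat.coprime_zero_right] at h
    exact hn.one_lt.ne' h
  rw [hn.coprime_iff_not_dvd] at h ⊢
  rw [← ZMod.natCast_eq_zero_iff] at h ⊢
  have h1 : (1 : ℕ) ≤ q ^ t := Nat.one_le_pow _ _ hq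
  have h2 : (1 : ℕ) ≤ (q ^ ((n - 1) * s + 1)) ^ t :=
    Nat.one_le_pow _ _ (Nat.one_le_pow _ _ hq)
  rw [Nat.cast_sub h1] at h
  rw [Nat.cast_sub h2]
  push_cast at h ⊢
  have key : (q : ZMod n) ^ ((n - 1) * s + 1) = (q : ZMod n) := by
    by_cases hq0 : (q : ZMod n) = 0
    · rw [hq0, zero_pow (by omega)]
    · rw [pow_add, pow_mul, ZMod.pow_card_sub_one_eq_one hq0, one_pow, one_mul, pow_one]
  rwa [key]

private theorem pow_injective_aux {K : Type*} [Field K] [Fintype K] (n : ℕ) (hn : n ≠ 0)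
    (h : Nat.Coprime n (Fintype.card K - 1)) :
    Function.Injective fun x : K => x ^ n := by
  intro x y hxy
  simp only at hxy
  rcases eq_or_ne y 0 with rfl | hy
  · rw [zero_pow hn, pow_eq_zero_iff hn] at hxy; exact hxy
  have hx : x ≠ 0 := by
    rintro rfl
    rw [zero_pow hn, eq_comm, pow_eq_zero_iff hn] at hxy
    exact hy hxy
  have hu1 : (x / y) ^ n = 1 := by rw [div_pow, hxy, div_self (pow_ne_zero _ hy)]
  have hu2 : (x / y) ^ (Fintype.card K - 1) = 1 := by
    rw [div_pow, FiniteField.pow_card_sub_one_eq_one x hx,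
      FiniteField.pow_card_sub_one_eq_one y hy, div_one]
  have : orderOf (x / y) ∣ Nat.gcd n (Fintype.card K - 1) :=
    Nat.dvd_gcd (orderOf_dvd_of_pow_eq_one hu1) (orderOf_dvd_of_pow_eq_one hu2)
  rw [h] at this
  have h1 : x / y = 1 := orderOf_eq_one_iff.mp (Nat.eq_one_of_dvd_one this)
  field_simp at h1
  exact h1

/-- Let `n` be an odd prime and `a ∈ F_q` with `gcd(n, q-1) = 1` if `a = 0`
(resp. `gcd(n, q²-1) = 1` if `a ≠ 0`).  Then for every `m = (n-1)s + 1` with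
`s ≥ 0`, the Dickson polynomial `D_n(x, a)` permutes the extension `F_{q^m}`. -/
theorem stmt_19 (n : ℕ) (hn : n.Prime) (hodd : Odd n)
    (F E : Type*) [Field F] [Fintype F] [Field E] [Fintype E] [Algebra F E]
    (a : F)
    (h : (a = 0 ∧ Nat.Coprime n (Fintype.card F - 1)) ∨
         (a ≠ 0 ∧ Nat.Coprime n (Fintype.card F ^ 2 - 1)))
    (s : ℕ) (hm : Module.finrank F E = (n - 1) * s + 1) :
    Function.Bijective fun x : E => (Polynomial.dickson 1 (algebraMap F E a) n).eval x := by
  have hq1 : 1 ≤ Fintype.card F := Fintype.card_pos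
  have hcardE : Fintype.card E = Fintype.card F ^ ((n - 1) * s + 1) := by
    rw [Module.card_eq_pow_finrank (K := F) (V := E), hm]
  rw [← Finite.injective_iff_bijective]
  rcases h with ⟨ha, hcop⟩ | ⟨ha, hcop⟩
  · -- a = 0 case
    subst ha
    have hcop' : Nat.Coprime n (Fintype.card E - 1) := by
      have := coprime_aux n (Fintype.card F) s 1 hn hq1 (by simpa using hcop)
      simpa [hcardE] using this
    simp only [map_zero, dickson_one_zero_aux n hn.one_lt.le]
    simpa using pow_injective_aux n hn.pos.ne' hcop'
  · -- a ≠ 0 case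
    have hcop' : Nat.Coprime n (Fintype.card E ^ 2 - 1) := by
      have := coprime_aux n (Fintype.card F) s 2 hn hq1 hcop
      simpa [hcardE] using this
    set K := AlgebraicClosure E
    letI : Field K := inferInstance
    set Q := Fintype.card E with hQ
    set a' : K := algebraMap E K (algebraMap F E a) with ha'
    have hinj : Function.Injective (algebraMap E K) := (algebraMap E K).injective
    have ha'0 : a' ≠ 0 := by
      simp only [ha', ne_eq, _root_.map_eq_zero]
      exact fun h0 => ha ((algebraMap F E).injective (by simpa using h0))
    -- Frobenius setup
    obtain ⟨p, hpI⟩ := CharP.exists E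
    haveI : CharP E p := hpI
    obtain ⟨k, hp, hcard⟩ := FiniteField.card E p
    haveI : CharP K p := charP_of_injective_algebraMap hinj p
    haveI : Fact p.Prime := ⟨hp⟩
    set φ : K →+* K := iterateFrobenius K p k with hφ
    have hφdef : ∀ c : K, φ c = c ^ Q := fun c => by
      rw [hφ, iterateFrobenius_def, ← hcard]
    have hφfix : ∀ e : E, φ (algebraMap E K e) = algebraMap E K e := fun e => by
      rw [hφdef, ← map_pow, FiniteField.pow_card]
    have pow_sub_one : ∀ w : K, w ≠ 0 → w ^ Q ^ 2 = w → w ^ (Q ^ 2 - 1) = 1 := by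
      intro w hw hww
      have hQ2 : 1 ≤ Q ^ 2 := Nat.one_le_pow _ _ Fintype.card_pos
      have hstep : w ^ (Q ^ 2 - 1) * w = w := by
        rw [← pow_succ, Nat.sub_add_cancel hQ2, hww]
      exact mul_right_cancel₀ hw (by rw [hstep, one_mul])
    have ha'e : a' ^ (Q ^ 2 - 1) = 1 := by
      apply pow_sub_one a' ha'0
      have : φ (φ a') = a' := by rw [hφfix _, hφfix _]
      rwa [hφdef, hφdef, ← pow_mul, ← pow_two] at this
    -- for each x : E, find y with y * (x' - y) = a'
    have hroot : ∀ x : E, ∃ y : K, y ≠ 0 ∧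
        y * (algebraMap E K x - y) = a' ∧ y ^ (Q ^ 2 - 1) = 1 := by
      intro x
      set x' : K := algebraMap E K x with hx'
      have hdeg : (X ^ 2 - C x' * X + C a' : K[X]).degree ≠ 0 := by
        have : (X ^ 2 - C x' * X + C a' : K[X]).degree = 2 := by
          compute_degree!
        rw [this]; decide
      obtain ⟨y, hy⟩ := IsAlgClosed.exists_root _ hdeg
      have hyeq : y ^ 2 - x' * y + a' = 0 := by
        simpa using hy
      have hprod : y * (x' - y) = a' := by ring_nf; linear_combination -hyeq
      have hy0 : y ≠ 0 := by
        rintro rfl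
        rw [zero_mul] at hprod
        exact ha'0 hprod.symm
      refine ⟨y, hy0, hprod, ?_⟩
      -- Frobenius argument : y ^ (Q^2) = y
      have hφy : φ y = y ∨ φ y = x' - y := by
        have : (φ y) ^ 2 - x' * (φ y) + a' = 0 := by
          have := congrArg φ hyeq
          simpa [map_add, map_sub, map_mul, map_pow, hφfix x, hx',
            show φ a' = a' from hφfix _] using this
        have hfac : (φ y - y) * (φ y - (x' - y)) = 0 := by
          linear_combination this - hyeq
        rcases mul_eq_zero.mp hfac with h0 | h0
        · exact Or.inl (sub_eq_zero.mp h0)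
        · exact Or.inr (sub_eq_zero.mp h0)
      have hyQ2 : y ^ Q ^ 2 = y := by
        have : φ (φ y) = y := by
          rcases hφy with h0 | h0
          · rw [h0, h0]
          · rw [h0, map_sub, hφfix x, h0]
            ring
        rw [hφdef, hφdef, ← pow_mul, ← pow_two] at this
        exact this
      exact pow_sub_one y hy0 hyQ2
    -- common cancellation lemma
    have hcancel : ∀ u v : K, u ≠ 0 → v ≠ 0 → u ^ (Q ^ 2 - 1) = 1 → v ^ (Q ^ 2 - 1) = 1 →
        u ^ n = v ^ n → u = v := by
      intro u v hu hv hu1 hv1 huv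
      have h1 : (u / v) ^ n = 1 := by rw [div_pow, huv, div_self (pow_ne_zero _ hv)]
      have h2 : (u / v) ^ (Q ^ 2 - 1) = 1 := by rw [div_pow, hu1, hv1, div_one]
      have hdvd : orderOf (u / v) ∣ Nat.gcd n (Q ^ 2 - 1) :=
        Nat.dvd_gcd (orderOf_dvd_of_pow_eq_one h1) (orderOf_dvd_of_pow_eq_one h2)
      rw [hcop'] at hdvd
      have : u / v = 1 := orderOf_eq_one_iff.mp (Nat.eq_one_of_dvd_one hdvd)
      field_simp at this
      exact this
    -- main injectivity
    intro x₁ x₂ hx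
    simp only at hx
    obtain ⟨y₁, hy₁0, hy₁p, hy₁e⟩ := hroot x₁
    obtain ⟨y₂, hy₂0, hy₂p, hy₂e⟩ := hroot x₂
    set z₁ : K := algebraMap E K x₁ - y₁ with hz₁
    set z₂ : K := algebraMap E K x₂ - y₂ with hz₂
    have hz₁0 : z₁ ≠ 0 := fun h0 => ha'0 (by rw [← hy₁p, h0, mul_zero])
    have hz₂0 : z₂ ≠ 0 := fun h0 => ha'0 (by rw [← hy₂p, h0, mul_zero])
    have hz₁e : z₁ ^ (Q ^ 2 - 1) = 1 := by
      have : z₁ = a' / y₁ := by field_simp [← hy₁p]; linear_combination hy₁p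
      rw [this, div_pow, ha'e, hy₁e, div_one]
    have hz₂e : z₂ ^ (Q ^ 2 - 1) = 1 := by
      have : z₂ = a' / y₂ := by field_simp [← hy₂p]; linear_combination hy₂p
      rw [this, div_pow, ha'e, hy₂e, div_one]
    -- map the dickson equation to K
    have hK : y₁ ^ n + z₁ ^ n = y₂ ^ n + z₂ ^ n := by
      have h1 : algebraMap E K ((Polynomial.dickson 1 (algebraMap F E a) n).eval x₁)
          = (Polynomial.dickson 1 a' n).eval (algebraMap E K x₁) := by
        rw [← Polynomial.eval₂_at_apply, ← Polynomial.eval_map, Polynomial.map_dickson]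
      have h2 : algebraMap E K ((Polynomial.dickson 1 (algebraMap F E a) n).eval x₂)
          = (Polynomial.dickson 1 a' n).eval (algebraMap E K x₂) := by
        rw [← Polynomial.eval₂_at_apply, ← Polynomial.eval_map, Polynomial.map_dickson]
      have e1 : (Polynomial.dickson 1 a' n).eval (algebraMap E K x₁) = y₁ ^ n + z₁ ^ n := by
        rw [← hy₁p, show algebraMap E K x₁ = y₁ + z₁ by rw [hz₁]; ring]
        exact dickson_eval_add_aux y₁ z₁ n
      have e2 : (Polynomial.dickson 1 a' n).eval (algebraMap E K x₂) = y₂ ^ n + z₂ ^ n := by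
        rw [← hy₂p, show algebraMap E K x₂ = y₂ + z₂ by rw [hz₂]; ring]
        exact dickson_eval_add_aux y₂ z₂ n
      rw [← e1, ← e2, ← h1, ← h2, hx]
    have hprodK : y₁ ^ n * z₁ ^ n = y₂ ^ n * z₂ ^ n := by
      rw [← mul_pow, ← mul_pow, hy₁p, hy₂p]
    have hcases : y₁ ^ n = y₂ ^ n ∨ y₁ ^ n = z₂ ^ n := by
      have h0 : (y₁ ^ n - y₂ ^ n) * (y₁ ^ n - z₂ ^ n) = 0 := by
        linear_combination (y₁ ^ n) * hK - hprodK
      rcases mul_eq_zero.mp h0 with h0 | h0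
      · exact Or.inl (sub_eq_zero.mp h0)
      · exact Or.inr (sub_eq_zero.mp h0)
    have hxx : algebraMap E K x₁ = algebraMap E K x₂ := by
      rcases hcases with hc | hc
      · have : y₁ = y₂ := hcancel _ _ hy₁0 hy₂0 hy₁e hy₂e hc
        subst this
        have : z₁ = z₂ := by
          have e1 : z₁ = a' / y₁ := by field_simp [← hy₁p]; linear_combination hy₁p
          have e2 : z₂ = a' / y₁ := by field_simp [← hy₂p]; linear_combination hy₂p
          rw [e1, e2]
        rw [hz₁, hz₂] at this
        exact sub_left_inj.mp this
      · have hyz : y₁ = z₂ := hcancel _ _ hy₁0 hz₂0 hy₁e hz₂e hc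
        have : z₁ = y₂ := by
          have e1 : z₁ = a' / y₁ := by field_simp [← hy₁p]; linear_combination hy₁p
          rw [e1, hyz]
          field_simp [← hy₂p]
          linear_combination -hy₂p
        have : algebraMap E K x₁ = y₁ + z₁ := by rw [hz₁]; ring
        rw [this, hyz, ‹z₁ = y₂›]
        rw [hz₂]; ring
    exact hinj hxx
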